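/- If x ≥ 1, y > e and x·exp(x²/2) = y, then ln(y²/ln(y²)) ≤ x² ≤ ln(y²/ln(y²/ln(y²))). -/

import Mathlib

/-- If `x ≥ 1`, `y > e` and `x·exp(x²/2) = y`, then
`ln(y²/ln(y²)) ≤ x² ≤ ln(y²/ln(y²/ln(y²)))`. -/
theorem stmt2 (x y : ℝ) (hx : 1 ≤ x) (hy : Real.exp 1 < y)
    (hxy : x * Real.exp (x ^ 2 / 2) = y) :
    Real.log (y ^ 2 / Real.log (y ^ 2)) ≤ x ^ 2 ∧
      x ^ 2 ≤ Real.log (y ^ 2 / Real.log (y ^ 2 / Real.log (y ^ 2))) := by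
  have hy0 : 0 < y := lt_trans (Real.exp_pos 1) hy
  set u := x ^ 2 with hu_def
  have hu : 1 ≤ u := by nlinarith
  have hu0 : 0 < u := lt_of_lt_of_le one_pos hu
  have hlogu : 0 ≤ Real.log u := Real.log_nonneg hu
  have hy2 : y ^ 2 = u * Real.exp u := by
    rw [← hxy, mul_pow, sq (Real.exp (u / 2)), ← Real.exp_add]
    norm_num
    exact hu_def.symm
  have hL : Real.log (y ^ 2) = Real.log u + u := by
    rw [hy2, Real.log_mul (ne_of_gt hu0) (Real.exp_ne_zero _), Real.log_exp]
  have hs0 : 0 < u + Real.log u := by linarith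
  have hle : Real.log u ≤ Real.log (u + Real.log u) :=
    Real.log_le_log hu0 (by linarith)
  have hy2ne : (y ^ 2 : ℝ) ≠ 0 := by positivity
  have hA : Real.log (y ^ 2 / Real.log (y ^ 2)) =
      u + Real.log u - Real.log (u + Real.log u) := by
    rw [Real.log_div hy2ne (by rw [hL]; linarith), hL]; ring
  have hApos : 0 < u + Real.log u - Real.log (u + Real.log u) := by
    linarith [Real.log_le_sub_one_of_pos hs0]
  constructor
  · rw [hA]; linarith
  · rw [hA, Real.log_div hy2ne (ne_of_gt hApos), hL]
    have hAle : u + Real.log u - Real.log (u + Real.log u) ≤ u := by linarith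
    have := Real.log_le_log hApos hAle
    linarith
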